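/- Let G be a clique-grid graph with representation f that admits a k-Steiner tree for terminal set R. Let T be a k-Steiner tree that first minimizes the number of edges between distinct cells and, among those, minimizes the number of Steiner vertices. Then every cell of G contains at most 24 Steiner vertices of T. -/

import Mathlib

open SimpleGraph

variable {V : Type*}

def IsSteinerTree (G : SimpleGraph V) (R : Set V) (T : G.Subgraph) : Prop :=
  T.coe.IsTree ∧ R ⊆ T.verts

def IsRepresentation (G : SimpleGraph V) (f : V → ℤ × ℤ) : Prop :=
  (∀ u v, u ≠ v → f u = f v → G.Adj u v) ∧
  (∀ u v, G.Adj u v → |(f u).1 - (f v).1| ≤ 2 ∧ |(f u).2 - (f v).2| ≤ 2)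

/-- The edges of `T` whose endpoints lie in distinct cells. -/
def interCellEdges (G : SimpleGraph V) (f : V → ℤ × ℤ) (T : G.Subgraph) : Set (Sym2 V) :=
  {e ∈ T.edgeSet | ∃ u v, e = s(u, v) ∧ f u ≠ f v}

namespace SteinerAux
variable {V : Type*}



variable {W : Type*}

lemma reach_trans {H K : SimpleGraph W} (h : ∀ x y, H.Adj x y → K.Reachable x y)
    {x y : W} (hxy : H.Reachable x y) : K.Reachable x y := by
  obtain ⟨p⟩ := hxy
  induction p with
  | nil => exact Reachable.refl _
  | cons ha _ ih => exact (h _ _ ha).trans ih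

lemma tree_not_reach {H : SimpleGraph W} (hH : H.IsAcyclic) {a b : W} (hab : H.Adj a b) :
    ¬ (H.deleteEdges {s(a,b)}).Reachable a b := by
  have hb := (isAcyclic_iff_forall_adj_isBridge.mp hH) hab
  rw [isBridge_iff] at hb
  exact hb

lemma reach_or {H : SimpleGraph W} {a b x : W} (hne : a ≠ b) (hr : H.Reachable x a) :
    (H.deleteEdges {s(a,b)}).Reachable x a ∨ (H.deleteEdges {s(a,b)}).Reachable x b := by
  classical
  obtain ⟨w⟩ := hr
  set p : H.Path x a := w.toPath with hp
  by_cases hm : s(a,b) ∈ (p : H.Walk x a).edges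
  · right
    have hbs : b ∈ (p : H.Walk x a).support :=
      Walk.snd_mem_support_of_mem_edges _ hm
    set q := (p : H.Walk x a).takeUntil b hbs with hq
    have hqpath : q.IsPath := p.2.takeUntil hbs
    have hanq : a ∉ q.support := by
      have hspec := Walk.take_spec (p : H.Walk x a) hbs
      have hnodup := p.2.support_nodup
      rw [← hspec, Walk.support_append] at hnodup
      have hmem : a ∈ ((p : H.Walk x a).dropUntil b hbs).support.tail := by
        have hend : a ∈ ((p : H.Walk x a).dropUntil b hbs).support :=
          Walk.end_mem_support _
        rw [Walk.support_eq_cons, List.mem_cons] at hend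
        rcases hend with h | h
        · exact absurd h hne
        · exact h
      intro haq
      exact (List.disjoint_of_nodup_append hnodup) haq hmem
    have hqe : ∀ e ∈ q.edges, e ∉ ({s(a,b)} : Set (Sym2 W)) := by
      intro e he hes
      rw [Set.mem_singleton_iff] at hes
      subst hes
      exact hanq (Walk.fst_mem_support_of_mem_edges _ he)
    exact ⟨q.toDeleteEdges _ hqe⟩
  · left
    have hqe : ∀ e ∈ (p : H.Walk x a).edges, e ∉ ({s(a,b)} : Set (Sym2 W)) := by
      intro e he hes
      rw [Set.mem_singleton_iff] at hes
      subst hes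
      exact hm he
    exact ⟨(p : H.Walk x a).toDeleteEdges _ hqe⟩

lemma swap_isTree {H : SimpleGraph W} (hH : H.IsTree)
    {a b a' b' : W} (hab : H.Adj a b) (hne' : a' ≠ b')
    (hne : s(a',b') ≠ s(a,b))
    (hra : (H.deleteEdges {s(a,b)}).Reachable a' a)
    (hrb : (H.deleteEdges {s(a,b)}).Reachable b' b) :
    (H.deleteEdges {s(a,b)} ⊔ fromEdgeSet {s(a',b')}).IsTree := by
  set H0 := H.deleteEdges {s(a,b)} with hH0
  set K := H0 ⊔ fromEdgeSet {s(a',b')} with hK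
  have hbr : ¬ H0.Reachable a b := tree_not_reach hH.2 hab
  have hnab' : ¬ H0.Reachable a' b' := fun h => hbr (hra.symm.trans (h.trans hrb))
  have hKadj : K.Adj a' b' := Or.inr (by simp [hne'])
  have hH0K : H0 ≤ K := le_sup_left
  have hKreach_ab : K.Reachable a b :=
    ((hra.symm.mono hH0K).trans hKadj.reachable).trans (hrb.mono hH0K)
  constructor
  · -- connected
    haveI : Nonempty W := ⟨a⟩
    refine Connected.mk ?_
    intro x y
    refine reach_trans (K := K) ?_ (hH.1.preconnected x y)
    intro x y hxy
    by_cases h : s(x, y) = s(a, b)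
    · rw [Sym2.eq_iff] at h
      rcases h with ⟨rfl, rfl⟩ | ⟨rfl, rfl⟩
      · exact hKreach_ab
      · exact hKreach_ab.symm
    · have : K.Adj x y := Or.inl ⟨hxy, fun hs => h hs.1⟩
      exact this.reachable
  · -- acyclic
    intro v c hc
    by_cases he : s(a',b') ∈ c.edges
    · -- the added edge is a bridge in K
      have hKbridge : K.IsBridge s(a',b') := by
        rw [isBridge_iff]
        intro hreach
        apply hnab'
        refine reach_trans (K := H0) ?_ hreach
        intro x y hxy
        rcases hxy with ⟨hxy1 | hxy1, hxy2⟩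
        · exact hxy1.reachable
        · exact absurd hxy1 hxy2
      have := ((isBridge_iff_adj_and_forall_cycle_notMem hKadj).mp hKbridge) c hc
      exact this he
    · have hedges : ∀ e ∈ c.edges, e ∈ H.edgeSet := by
        intro e hce
        have := c.edges_subset_edgeSet hce
        rw [hK, edgeSet_sup] at this
        rcases this with h1 | h1
        · rw [hH0, edgeSet_deleteEdges] at h1
          exact h1.1
        · rw [edgeSet_fromEdgeSet] at h1
          exact absurd h1.1 (by rintro rfl; exact he hce)
      exact hH.2 (c.transfer H hedges) (hc.transfer hedges)


lemma sym2_coe {s : Set V} {x y z w : ↥s} : s(x,y) = s(z,w) ↔ s(x.1,y.1) = s(z.1,w.1) := by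
  constructor
  · intro h
    have := congrArg (Sym2.map (Subtype.val)) h
    simpa using this
  · intro h
    rw [Sym2.eq_iff] at h ⊢
    rcases h with ⟨h1, h2⟩ | ⟨h1, h2⟩
    · exact Or.inl ⟨Subtype.ext h1, Subtype.ext h2⟩
    · exact Or.inr ⟨Subtype.ext h1, Subtype.ext h2⟩

/-- The subgraph obtained from `T` by deleting the edge `s(a,b)` and adding the edge `s(a',b')`. -/
def Swap (G : SimpleGraph V) (T : G.Subgraph) (a b a' b' : V) (hG : G.Adj a' b')
    (ha' : a' ∈ T.verts) (hb' : b' ∈ T.verts) : G.Subgraph where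
  verts := T.verts
  Adj x y := (T.Adj x y ∧ s(x,y) ≠ s(a,b)) ∨ s(x,y) = s(a',b')
  adj_sub := by
    rintro x y (⟨h, _⟩ | h)
    · exact T.adj_sub h
    · rw [Sym2.eq_iff] at h
      rcases h with ⟨rfl, rfl⟩ | ⟨rfl, rfl⟩
      · exact hG
      · exact hG.symm
  edge_vert := by
    rintro x y (⟨h, _⟩ | h)
    · exact T.edge_vert h
    · rw [Sym2.eq_iff] at h
      rcases h with ⟨rfl, rfl⟩ | ⟨rfl, rfl⟩
      · exact ha'
      · exact hb'
  symm := by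
    refine ⟨fun x y hxy => ?_⟩; rcases hxy with (⟨h, h2⟩ | h)
    · exact Or.inl ⟨T.symm.symm _ _ h, by rwa [Sym2.eq_swap]⟩
    · exact Or.inr (by rwa [Sym2.eq_swap])

lemma Swap_verts (G : SimpleGraph V) (T : G.Subgraph) (a b a' b' : V) (hG : G.Adj a' b')
    (ha' : a' ∈ T.verts) (hb' : b' ∈ T.verts) :
    (Swap G T a b a' b' hG ha' hb').verts = T.verts := rfl

lemma Swap_adj {G : SimpleGraph V} {T : G.Subgraph} {a b a' b' : V} {hG : G.Adj a' b'}
    {ha' : a' ∈ T.verts} {hb' : b' ∈ T.verts} {x y : V} :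
    (Swap G T a b a' b' hG ha' hb').Adj x y ↔
      (T.Adj x y ∧ s(x,y) ≠ s(a,b)) ∨ s(x,y) = s(a',b') := Iff.rfl

lemma Swap_coe {G : SimpleGraph V} {T : G.Subgraph} {a b a' b' : V} (hG : G.Adj a' b')
    (ha : a ∈ T.verts) (hb : b ∈ T.verts) (ha' : a' ∈ T.verts) (hb' : b' ∈ T.verts) :
    (Swap G T a b a' b' hG ha' hb').coe =
      (T.coe.deleteEdges {s((⟨a, ha⟩ : T.verts), (⟨b, hb⟩ : T.verts))} ⊔
        fromEdgeSet {s((⟨a', ha'⟩ : T.verts), (⟨b', hb'⟩ : T.verts))}) := by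
  ext x y
  show (T.Adj x.1 y.1 ∧ s(x.1,y.1) ≠ s(a,b)) ∨ s(x.1,y.1) = s(a',b') ↔ _
  show _ ↔ ((T.Adj x.1 y.1 ∧ ¬ (s(x,y) = s((⟨a, ha⟩ : T.verts), (⟨b, hb⟩ : T.verts)) ∧ x ≠ y)) ∨
    (s(x,y) = s((⟨a', ha'⟩ : T.verts), (⟨b', hb'⟩ : T.verts)) ∧ x ≠ y))
  constructor
  · rintro (⟨h1, h2⟩ | h)
    · exact Or.inl ⟨h1, fun hs => h2 (sym2_coe.mp hs.1)⟩
    · refine Or.inr ⟨sym2_coe.mpr h, ?_⟩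
      intro hxy
      cases hxy
      rw [Sym2.eq_iff] at h
      rcases h with ⟨h3, h4⟩ | ⟨h3, h4⟩
      · exact hG.ne (h3.symm.trans h4)
      · exact hG.ne (h4.symm.trans h3)
  · rintro (⟨h1, h2⟩ | ⟨h, _⟩)
    · exact Or.inl ⟨h1, fun hs => h2 ⟨sym2_coe.mpr hs, fun e => (T.adj_sub h1).ne (congrArg Subtype.val e)⟩⟩
    · exact Or.inr (sym2_coe.mp h)

lemma Swap_isTree {G : SimpleGraph V} {T : G.Subgraph} {a b a' b' : V} (hG : G.Adj a' b')
    (ha : a ∈ T.verts) (hb : b ∈ T.verts) (ha' : a' ∈ T.verts) (hb' : b' ∈ T.verts)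
    (hT : T.coe.IsTree) (hab : T.Adj a b) (hne' : a' ≠ b') (hne : s(a',b') ≠ s(a,b))
    (hra : (T.coe.deleteEdges {s((⟨a, ha⟩ : T.verts), (⟨b, hb⟩ : T.verts))}).Reachable
      ⟨a', ha'⟩ ⟨a, ha⟩)
    (hrb : (T.coe.deleteEdges {s((⟨a, ha⟩ : T.verts), (⟨b, hb⟩ : T.verts))}).Reachable
      ⟨b', hb'⟩ ⟨b, hb⟩) :
    (Swap G T a b a' b' hG ha' hb').coe.IsTree := by
  rw [Swap_coe hG ha hb ha' hb']
  exact swap_isTree hT hab (fun h => hne' (congrArg Subtype.val h))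
    (fun h => hne (sym2_coe.mp h)) hra hrb

lemma walk_avoid {G : SimpleGraph V} {T : G.Subgraph} {u : V}
    {x y : ↥T.verts} (p : T.coe.Walk x y) (hp : ∀ z ∈ p.support, (z : V) ≠ u)
    (hx : x.1 ∈ (T.deleteVerts {u}).verts) (hy : y.1 ∈ (T.deleteVerts {u}).verts) :
    (T.deleteVerts {u}).coe.Reachable ⟨x.1, hx⟩ ⟨y.1, hy⟩ := by
  induction p with
  | nil =>
    exact Reachable.refl _
  | @cons x z y h q ih =>
    have hz : z.1 ∈ (T.deleteVerts {u}).verts := by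
      rw [Subgraph.deleteVerts_verts]
      exact ⟨z.2, hp z (by simp)⟩
    have hadj : (T.deleteVerts {u}).coe.Adj ⟨x.1, hx⟩ ⟨z.1, hz⟩ := by
      show (T.deleteVerts {u}).Adj x.1 z.1
      rw [Subgraph.deleteVerts_adj]
      exact ⟨x.2, (Set.mem_diff _).mp hx |>.2, z.2, (Set.mem_diff _).mp hz |>.2, h⟩
    exact hadj.reachable.trans (ih (fun w hw => hp w (by simp [hw])) hz hy)

lemma leafdel [DecidableEq V] {G : SimpleGraph V} {T : G.Subgraph} (hT : T.coe.IsTree) {u v : V}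
    (huv : T.Adj u v) (hv' : ∀ x, T.Adj u x → x = v) :
    (T.deleteVerts {u}).coe.IsTree := by
  have hune : u ≠ v := (T.adj_sub huv).ne
  have huT : u ∈ T.verts := T.edge_vert huv
  have hvT : v ∈ T.verts := T.edge_vert huv.symm
  have hvT' : v ∈ (T.deleteVerts {u}).verts := by
    rw [Subgraph.deleteVerts_verts]; exact ⟨hvT, fun h => hune (Set.mem_singleton_iff.mp h).symm⟩
  constructor
  · -- connected
    haveI : Nonempty ↥(T.deleteVerts {u}).verts := ⟨⟨v, hvT'⟩⟩
    refine Connected.mk ?_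
    rintro ⟨x, hx⟩ ⟨y, hy⟩
    have hxT : x ∈ T.verts := hx.1
    have hyT : y ∈ T.verts := hy.1
    have hxu : x ≠ u := fun h => hx.2 (by simp [h])
    have hyu : y ≠ u := fun h => hy.2 (by simp [h])
    have key : ∀ (y' : V) (hy' : y' ∈ (T.deleteVerts {u}).verts)
        (r : T.coe.Walk ⟨u, huT⟩ ⟨y', hy'.1⟩), r.IsPath → u ≠ y' →
        (T.deleteVerts {u}).coe.Reachable ⟨v, hvT'⟩ ⟨y', hy'⟩ := by
      intro y' hy' r hrpath hyne
      cases r with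
      | nil => exact absurd rfl hyne
      | @cons _ z _ hadj r' =>
        have hz : z.1 = v := hv' z.1 hadj
        have hupr : (⟨u, huT⟩ : ↥T.verts) ∉ r'.support :=
          ((Walk.cons_isPath_iff _ _).mp hrpath).2
        have havoid : ∀ w ∈ r'.support, (w : V) ≠ u := by
          intro w hw hwu
          exact hupr (by rwa [show w = (⟨u, huT⟩ : ↥T.verts) from Subtype.ext hwu] at hw)
        have hzmem : z.1 ∈ (T.deleteVerts {u}).verts := by rw [hz]; exact hvT'
        have := walk_avoid r' havoid hzmem hy'
        rwa [show (⟨z.1, hzmem⟩ : ↥(T.deleteVerts {u}).verts) = ⟨v, hvT'⟩ from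
          Subtype.ext hz] at this
    obtain ⟨w⟩ := hT.1.preconnected ⟨x, hx.1⟩ ⟨y, hy.1⟩
    set p := w.toPath with hpdef
    by_cases hu : (⟨u, huT⟩ : ↥T.verts) ∈ (p.1).support
    · set q := (p.1).takeUntil ⟨u, huT⟩ hu with hq
      set r := (p.1).dropUntil ⟨u, huT⟩ hu with hr
      have hr1 := key y hy r (p.2.dropUntil hu) (fun h => hyu h.symm)
      have hq1 := key x hx q.reverse (p.2.takeUntil hu).reverse (fun h => hxu h.symm)
      exact hq1.symm.trans hr1
    · have havoid : ∀ w ∈ (p.1).support, (w : V) ≠ u := by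
        intro w hw hwu
        exact hu (by rwa [show w = (⟨u, huT⟩ : ↥T.verts) from Subtype.ext hwu] at hw)
      exact walk_avoid _ havoid hx hy
  · -- acyclic
    intro z c hc
    have hinj : Function.Injective
        (fun (w : ↥(T.deleteVerts {u}).verts) => (⟨w.1, w.2.1⟩ : ↥T.verts)) := by
      intro a b h
      have : a.1 = b.1 := congrArg (fun t => t.1) h
      exact Subtype.ext this
    let φ : (T.deleteVerts {u}).coe →g T.coe :=
      ⟨fun w => ⟨w.1, w.2.1⟩, by
        intro a b hab
        exact ((Subgraph.deleteVerts_adj.mp hab).2.2.2.2 : T.Adj a.1 b.1)⟩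
    exact hT.2 (c.map φ) (hc.map hinj)

section
variable {G : SimpleGraph V} {T : G.Subgraph} {a b a' b' : V} {hG : G.Adj a' b'}
    {ha' : a' ∈ T.verts} {hb' : b' ∈ T.verts}

lemma Swap_mem_edgeSet {e : Sym2 V} :
    e ∈ (Swap G T a b a' b' hG ha' hb').edgeSet ↔
      (e ∈ T.edgeSet ∧ e ≠ s(a,b)) ∨ e = s(a',b') := by
  refine Sym2.ind (fun x y => ?_) e
  rw [Subgraph.mem_edgeSet, Swap_adj, Subgraph.mem_edgeSet]

lemma swap_intercell_lt [Fintype V] (f : V → ℤ × ℤ)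
    (hab : T.Adj a b) (hfab : f a ≠ f b) (hfab' : f a' = f b') :
    (interCellEdges G f (Swap G T a b a' b' hG ha' hb')).ncard <
      (interCellEdges G f T).ncard := by
  have hsub : interCellEdges G f (Swap G T a b a' b' hG ha' hb') ⊆
      interCellEdges G f T \ {s(a,b)} := by
    rintro e ⟨he, u, v, rfl, hfuv⟩
    rw [Swap_mem_edgeSet] at he
    rcases he with ⟨h1, h2⟩ | h1
    · exact ⟨⟨h1, u, v, rfl, hfuv⟩, h2⟩
    · exfalso
      rw [Sym2.eq_iff] at h1
      rcases h1 with ⟨rfl, rfl⟩ | ⟨rfl, rfl⟩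
      · exact hfuv hfab'
      · exact hfuv hfab'.symm
  have hmem : s(a,b) ∈ interCellEdges G f T :=
    ⟨Subgraph.mem_edgeSet.mpr hab, a, b, rfl, hfab⟩
  calc (interCellEdges G f (Swap G T a b a' b' hG ha' hb')).ncard
      ≤ (interCellEdges G f T \ {s(a,b)}).ncard :=
        Set.ncard_le_ncard hsub ((Set.toFinite _).diff)
    _ < (interCellEdges G f T).ncard :=
        Set.ncard_diff_singleton_lt_of_mem hmem (Set.toFinite _)

end

lemma delete_steiner [Fintype V] (G : SimpleGraph V) (f : V → ℤ × ℤ)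
    (hcl : ∀ x y : V, x ≠ y → f x = f y → G.Adj x y) (c : ℤ × ℤ) :
    ∀ n : ℕ, ∀ T : G.Subgraph, ∀ u : V, T.coe.IsTree → u ∈ T.verts → f u = c →
      (∀ x, T.Adj u x → f x = c) → {x | T.Adj u x}.ncard = n → (T.verts \ {u}).Nonempty →
      ∃ T' : G.Subgraph, T'.coe.IsTree ∧ T'.verts = T.verts \ {u} ∧
        (∀ x y : V, T'.Adj x y → T.Adj x y ∨ (f x = c ∧ f y = c)) := by
  classical
  intro n
  induction n using Nat.strong_induction_on with
  | _ n IH =>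
  intro T u htree huT hfu hnbr hcard hne
  match n, hcard with
  | 0, hcard =>
    exfalso
    obtain ⟨w, hwT⟩ := hne
    have hwu : w ≠ u := fun h => hwT.2 (by simp [h])
    obtain ⟨p⟩ := htree.1.preconnected ⟨u, huT⟩ ⟨w, hwT.1⟩
    cases p with
    | nil => exact hwu rfl
    | @cons _ z _ h q =>
      have : z.1 ∈ {x | T.Adj u x} := h
      rw [Set.ncard_eq_zero (Set.toFinite _)] at hcard
      rw [hcard] at this
      exact this
  | 1, hcard =>
    obtain ⟨v, hv⟩ := Set.ncard_eq_one.mp hcard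
    have huv : T.Adj u v := by
      have : v ∈ {x | T.Adj u x} := by rw [hv]; rfl
      exact this
    have hv' : ∀ x, T.Adj u x → x = v := by
      intro x hx
      have : x ∈ {x | T.Adj u x} := hx
      rw [hv] at this
      exact this
    refine ⟨T.deleteVerts {u}, leafdel htree huv hv', by rw [Subgraph.deleteVerts_verts], ?_⟩
    intro x y h
    exact Or.inl (Subgraph.deleteVerts_adj.mp h).2.2.2.2
  | (m+2), hcard =>
    have hfin : {x | T.Adj u x}.Finite := Set.toFinite _
    obtain ⟨v1, h1, v2, h2, hv12⟩ := (Set.one_lt_ncard hfin).mp (by omega)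
    have hadj1 : T.Adj u v1 := h1
    have hadj2 : T.Adj u v2 := h2
    have hu1 : u ≠ v1 := (T.adj_sub hadj1).ne
    have hu2 : u ≠ v2 := (T.adj_sub hadj2).ne
    have hv1T : v1 ∈ T.verts := T.edge_vert hadj1.symm
    have hv2T : v2 ∈ T.verts := T.edge_vert hadj2.symm
    have hG12 : G.Adj v1 v2 := hcl _ _ hv12 ((hnbr v1 h1).trans (hnbr v2 h2).symm)
    have hneS : s(v1,v2) ≠ s(u,v2) := by
      intro h
      rw [Sym2.eq_iff] at h
      rcases h with ⟨h3, h4⟩ | ⟨h3, h4⟩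
      · exact hu1 h3.symm
      · exact hu2 h4.symm
    have hra : (T.coe.deleteEdges {s((⟨u, huT⟩ : T.verts), (⟨v2, hv2T⟩ : T.verts))}).Reachable
        ⟨v1, hv1T⟩ ⟨u, huT⟩ := by
      refine Adj.reachable ⟨hadj1.symm, ?_⟩
      intro hs
      have := sym2_coe.mp hs.1
      rw [Sym2.eq_iff] at this
      rcases this with ⟨h3, h4⟩ | ⟨h3, h4⟩
      · exact hu2 h4
      · exact hv12 h3
    set T₁ := Swap G T u v2 v1 v2 hG12 hv1T hv2T with hT₁
    have htree₁ : T₁.coe.IsTree :=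
      Swap_isTree hG12 huT hv2T hv1T hv2T htree hadj2 hv12 hneS hra (Reachable.refl _)
    have hnbrs₁ : {x | T₁.Adj u x} = {x | T.Adj u x} \ {v2} := by
      ext x
      simp only [Set.mem_setOf_eq, Set.mem_diff, Set.mem_singleton_iff]
      rw [hT₁, Swap_adj]
      constructor
      · rintro (⟨h3, h4⟩ | h3)
        · refine ⟨h3, fun h => h4 ?_⟩
          subst h
          rfl
        · exfalso
          rw [Sym2.eq_iff] at h3
          rcases h3 with ⟨h5, h6⟩ | ⟨h5, h6⟩
          · exact hu1 h5
          · exact hu2 h5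
      · rintro ⟨h3, h4⟩
        refine Or.inl ⟨h3, fun h => ?_⟩
        rw [Sym2.eq_iff] at h
        rcases h with ⟨h5, h6⟩ | ⟨h5, h6⟩
        · exact h4 h6
        · exact hu2 h5
    have hcard₁ : {x | T₁.Adj u x}.ncard = m + 1 := by
      rw [hnbrs₁, Set.ncard_diff_singleton_of_mem h2, hcard]
      omega
    obtain ⟨T₂, ht2, hv2', he2⟩ := IH (m+1) (by omega) T₁ u htree₁ huT hfu
      (by
        intro x hx
        have : x ∈ {x | T₁.Adj u x} := hx
        rw [hnbrs₁] at this
        exact hnbr x this.1) hcard₁ hne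
    refine ⟨T₂, ht2, hv2', ?_⟩
    intro x y h
    rcases he2 x y h with h3 | h3
    · rw [hT₁, Swap_adj] at h3
      rcases h3 with ⟨h4, _⟩ | h4
      · exact Or.inl h4
      · right
        rw [Sym2.eq_iff] at h4
        rcases h4 with ⟨rfl, rfl⟩ | ⟨rfl, rfl⟩
        · exact ⟨hnbr _ h1, hnbr _ h2⟩
        · exact ⟨hnbr _ h2, hnbr _ h1⟩
    · exact Or.inr h3

end SteinerAux

/-- If a `k`-Steiner tree exists and `T` is a `k`-Steiner tree that first minimizes the number
of inter-cell edges and, among those, minimizes the number of Steiner vertices, then every cell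
contains at most 24 Steiner vertices of `T`. -/
theorem stmt4 [Fintype V] (G : SimpleGraph V) (f : V → ℤ × ℤ) (hf : IsRepresentation G f)
    (R : Set V) (k : ℕ) (T : G.Subgraph)
    (hT : IsSteinerTree G R T ∧ (T.verts \ R).ncard ≤ k)
    (hmin1 : ∀ T' : G.Subgraph, IsSteinerTree G R T' ∧ (T'.verts \ R).ncard ≤ k →
      (interCellEdges G f T).ncard ≤ (interCellEdges G f T').ncard)
    (hmin2 : ∀ T' : G.Subgraph, IsSteinerTree G R T' ∧ (T'.verts \ R).ncard ≤ k →
      (interCellEdges G f T').ncard = (interCellEdges G f T).ncard →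
      (T.verts \ R).ncard ≤ (T'.verts \ R).ncard)
    (c : ℤ × ℤ) :
    {v | v ∈ T.verts \ R ∧ f v = c}.ncard ≤ 24 := by
  classical
  by_contra hcon
  push_neg at hcon
  obtain ⟨⟨htree, hR⟩, hk⟩ := hT
  set S := {v | v ∈ T.verts \ R ∧ f v = c} with hSdef
  -- contradiction from a strictly better tree with the same vertex set
  have hcontra1 : ∀ T' : G.Subgraph, T'.coe.IsTree → T'.verts = T.verts →
      (interCellEdges G f T').ncard < (interCellEdges G f T).ncard → False := by
    intro T' ht' hv' hlt
    have hst : IsSteinerTree G R T' ∧ (T'.verts \ R).ncard ≤ k :=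
      ⟨⟨ht', hv' ▸ hR⟩, by rw [hv']; exact hk⟩
    exact absurd (hmin1 T' hst) (by omega)
  -- Step A : every Steiner vertex in cell c has a T-neighbour outside cell c
  have hout : ∀ u, u ∈ S → ∃ y, T.Adj u y ∧ f y ≠ c := by
    intro u hu
    by_contra hno
    push_neg at hno
    have huT : u ∈ T.verts := hu.1.1
    have huR : u ∉ R := hu.1.2
    obtain ⟨w, hwS, hwu⟩ := Set.exists_ne_of_one_lt_ncard (show 1 < S.ncard by omega) u
    have hne : (T.verts \ {u}).Nonempty :=
      ⟨w, hwS.1.1, fun h => hwu (Set.mem_singleton_iff.mp h)⟩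
    obtain ⟨T', ht', hv', he'⟩ :=
      SteinerAux.delete_steiner G f hf.1 c _ T u htree huT hu.2 hno rfl hne
    have hRT' : R ⊆ T'.verts := by
      rw [hv']
      exact fun r hr => ⟨hR hr, fun h => huR ((Set.mem_singleton_iff.mp h) ▸ hr)⟩
    have hsver : T'.verts \ R = (T.verts \ R) \ {u} := by
      rw [hv']
      ext z
      simp only [Set.mem_diff, Set.mem_singleton_iff]
      tauto
    have hkT' : (T'.verts \ R).ncard ≤ k := by
      rw [hsver]
      exact le_trans (Set.ncard_le_ncard (Set.diff_subset) (Set.toFinite _)) hk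
    have hst : IsSteinerTree G R T' ∧ (T'.verts \ R).ncard ≤ k := ⟨⟨ht', hRT'⟩, hkT'⟩
    have hsub : interCellEdges G f T' ⊆ interCellEdges G f T := by
      rintro e ⟨he, x, y, rfl, hfxy⟩
      rw [Subgraph.mem_edgeSet] at he
      rcases he' x y he with h3 | h3
      · exact ⟨Subgraph.mem_edgeSet.mpr h3, x, y, rfl, hfxy⟩
      · exact absurd (h3.1.trans h3.2.symm) hfxy
    have heq : (interCellEdges G f T').ncard = (interCellEdges G f T).ncard :=
      le_antisymm (Set.ncard_le_ncard hsub (Set.toFinite _)) (hmin1 T' hst)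
    have hlt : (T'.verts \ R).ncard < (T.verts \ R).ncard := by
      rw [hsver]
      exact Set.ncard_diff_singleton_lt_of_mem hu.1 (Set.toFinite _)
    exact absurd (hmin2 T' hst heq) (by omega)
  -- Step B : choose an outside neighbour for each Steiner vertex in the cell
  have hout' : ∀ u : V, ∃ z : V, u ∈ S → T.Adj u z ∧ f z ≠ c := by
    intro u
    by_cases h : u ∈ S
    · obtain ⟨z, hz⟩ := hout u h
      exact ⟨z, fun _ => hz⟩
    · exact ⟨u, fun hu => absurd hu h⟩
  choose yv hyv using hout'
  -- Step C : the cells of the chosen neighbours are pairwise distinct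
  have hinj : Set.InjOn (fun u => f (yv u)) S := by
    intro u hu w hw hfeq
    by_contra hneq
    simp only at hfeq
    obtain ⟨hadj_u, hfyu⟩ := hyv u hu
    obtain ⟨hadj_w, hfyw⟩ := hyv w hw
    set x := yv w with hxdef
    set yy := yv u with hyydef
    have hfu : f u = c := hu.2
    have hfw : f w = c := hw.2
    have hux : u ≠ x := fun h => hfyw (h ▸ hfu)
    have hwx : w ≠ x := (T.adj_sub hadj_w).ne
    have huyy : u ≠ yy := (T.adj_sub hadj_u).ne
    have hwyy : w ≠ yy := fun h => hfyu (h ▸ hfw)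
    have huT : u ∈ T.verts := hu.1.1
    have hwT : w ∈ T.verts := hw.1.1
    have hxT : x ∈ T.verts := T.edge_vert hadj_w.symm
    have hyyT : yy ∈ T.verts := T.edge_vert hadj_u.symm
    have hfwx : f w ≠ f x := fun h => hfyw (h ▸ hfw)
    have hedge_uy : (T.coe.deleteEdges
        {s((⟨x, hxT⟩ : T.verts), (⟨w, hwT⟩ : T.verts))}).Adj ⟨u, huT⟩ ⟨yy, hyyT⟩ := by
      refine ⟨hadj_u, ?_⟩
      intro hs
      have := SteinerAux.sym2_coe.mp hs.1
      rw [Sym2.eq_iff] at this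
      rcases this with ⟨h3, h4⟩ | ⟨h3, h4⟩
      · exact hux h3
      · exact hneq h3
    by_cases hc1 : (T.coe.deleteEdges
        {s((⟨x, hxT⟩ : T.verts), (⟨w, hwT⟩ : T.verts))}).Reachable ⟨u, huT⟩ ⟨x, hxT⟩
    · -- replace edge xw by uw
      have hGuw : G.Adj u w := hf.1 u w hneq (hfu.trans hfw.symm)
      have hneS : s(u,w) ≠ s(x,w) := by
        intro h
        rw [Sym2.eq_iff] at h
        rcases h with ⟨h3, h4⟩ | ⟨h3, h4⟩
        · exact hux h3
        · exact hneq h3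
      have htree₁ := SteinerAux.Swap_isTree hGuw hxT hwT huT hwT htree hadj_w.symm hneq hneS
        hc1 (Reachable.refl _)
      have hlt := SteinerAux.swap_intercell_lt (hG := hGuw) (ha' := huT) (hb' := hwT)
        (a := x) (b := w) f hadj_w.symm (fun h => hfwx h.symm) (hfu.trans hfw.symm)
      exact hcontra1 _ htree₁ rfl hlt
    · -- replace edge wx by yy x
      have hc2 : (T.coe.deleteEdges
          {s((⟨x, hxT⟩ : T.verts), (⟨w, hwT⟩ : T.verts))}).Reachable ⟨u, huT⟩ ⟨w, hwT⟩ := by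
        have := SteinerAux.reach_or (H := T.coe) (a := ⟨x, hxT⟩) (b := ⟨w, hwT⟩)
          (fun h => hwx (congrArg Subtype.val h).symm)
          (htree.1.preconnected ⟨u, huT⟩ ⟨x, hxT⟩)
        exact this.resolve_left hc1
      have hyx : yy ≠ x := by
        intro h
        apply hc1
        have : (⟨yy, hyyT⟩ : T.verts) = ⟨x, hxT⟩ := Subtype.ext h
        exact (this ▸ hedge_uy).reachable
      have hreach_yw : (T.coe.deleteEdges
          {s((⟨x, hxT⟩ : T.verts), (⟨w, hwT⟩ : T.verts))}).Reachable ⟨yy, hyyT⟩ ⟨w, hwT⟩ :=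
        (hedge_uy.reachable.symm).trans hc2
      have hsetswap : ({s((⟨w, hwT⟩ : T.verts), (⟨x, hxT⟩ : T.verts))} : Set (Sym2 _)) =
          {s((⟨x, hxT⟩ : T.verts), (⟨w, hwT⟩ : T.verts))} := by rw [Sym2.eq_swap]
      have hGyx : G.Adj yy x := hf.1 yy x hyx hfeq
      have hneS : s(yy,x) ≠ s(w,x) := by
        intro h
        rw [Sym2.eq_iff] at h
        rcases h with ⟨h3, h4⟩ | ⟨h3, h4⟩
        · exact hwyy h3.symm
        · exact hyx h3
      have htree₁ := SteinerAux.Swap_isTree hGyx hwT hxT hyyT hxT htree hadj_w hyx hneS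
        (by rw [hsetswap]; exact hreach_yw) (Reachable.refl _)
      have hlt := SteinerAux.swap_intercell_lt (hG := hGyx) (ha' := hyyT) (hb' := hxT)
        (a := w) (b := x) f hadj_w hfwx hfeq
      exact hcontra1 _ htree₁ rfl hlt
  -- Step D : pigeonhole over the 24 surrounding cells
  set D : Finset (ℤ × ℤ) :=
    ((Finset.Icc (c.1-2) (c.1+2)) ×ˢ (Finset.Icc (c.2-2) (c.2+2))).erase c with hDdef
  have hmaps : ∀ u ∈ S, f (yv u) ∈ (D : Set (ℤ × ℤ)) := by
    intro u hu
    obtain ⟨hadj, hfy⟩ := hyv u hu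
    obtain ⟨b1, b2⟩ := hf.2 u (yv u) (T.adj_sub hadj)
    rw [hu.2] at b1 b2
    have hb1 := abs_le.mp b1
    have hb2 := abs_le.mp b2
    rw [hDdef]
    simp only [Finset.coe_erase, Set.mem_diff, Finset.mem_coe, Finset.mem_product,
      Finset.mem_Icc, Set.mem_singleton_iff]
    exact ⟨⟨⟨by omega, by omega⟩, ⟨by omega, by omega⟩⟩, hfy⟩
  have hcard := Set.ncard_le_ncard_of_injOn _ hmaps hinj (Set.toFinite _)
  rw [Set.ncard_coe_finset] at hcard
  have hDcard : D.card = 24 := by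
    rw [hDdef, Finset.card_erase_of_mem (by
      rw [Finset.mem_product, Finset.mem_Icc, Finset.mem_Icc]
      omega), Finset.card_product, Int.card_Icc, Int.card_Icc,
      show c.1 + 2 + 1 - (c.1 - 2) = 5 by ring, show c.2 + 2 + 1 - (c.2 - 2) = 5 by ring]
    rfl
  omega
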